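/- Let Z : ℂ → ℂ satisfy the completed-zeta axioms with residue r. Then (s−1/2)²·( Z(s+1/2)³·Z(2s+1) + 3·Z(s−1/2)·Z(s+1/2)·Z(2s)·Z(s+3/2) + Z(s−1/2)²·Z(s−3/2)·Z(2s) ) tends to 0 as s → 1/2 along s ≠ 1/2. (Each of the three summands has a pole of order 3 at s = 1/2, but the Laurent coefficients of order −3 and −2 cancel in the sum; this is the cancellation of the order-3 poles of the intertwining operators indexed by Σ₃∖Σ₄ in the split Spin₈ case at s = 1/2 with trivial character.) -/

import Mathlib

open Filter Topology Function

theorem completed_zeta_order3_cancellation (Z : ℂ → ℂ) (r : ℝ)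
    (hdiff : ∀ s : ℂ, s ≠ 0 → s ≠ 1 → DifferentiableAt ℂ Z s)
    (hfe : ∀ s : ℂ, Z (1 - s) = Z s)
    (hr : 0 < r)
    (hres : Tendsto (fun s : ℂ => (s - 1) * Z s) (𝓝[≠] 1) (𝓝 (r : ℂ))) :
    Tendsto (fun s : ℂ => (s - 1/2)^2 *
      (Z (s + 1/2)^3 * Z (2*s + 1) +
        3 * Z (s - 1/2) * Z (s + 1/2) * Z (2*s) * Z (s + 3/2) +
        Z (s - 1/2)^2 * Z (s - 3/2) * Z (2*s)))
      (𝓝[≠] (1/2)) (𝓝 0) := by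
  set f : ℂ → ℂ := fun u => u * Z (u + 1) with hf
  have htrans : Tendsto (fun u : ℂ => u + 1) (𝓝[≠] (0:ℂ)) (𝓝[≠] (1:ℂ)) := by
    apply tendsto_nhdsWithin_of_tendsto_nhds_of_eventually_within
    · have h : Tendsto (fun u : ℂ => u + 1) (𝓝 (0:ℂ)) (𝓝 (1:ℂ)) := by
        simpa using (continuous_add_right (1:ℂ)).tendsto 0
      exact h.mono_left nhdsWithin_le_nhds
    · filter_upwards [self_mem_nhdsWithin] with u hu
      simp only [Set.mem_compl_iff, Set.mem_singleton_iff] at hu ⊢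
      intro h; exact hu (by linear_combination h)
  have hT : Tendsto f (𝓝[≠] (0:ℂ)) (𝓝 (r : ℂ)) := by
    have h2 := hres.comp htrans
    refine Tendsto.congr (fun u => ?_) h2
    simp only [Function.comp, hf, add_sub_cancel_right]
  set g : ℂ → ℂ := Function.update f 0 (r : ℂ) with hg
  have hgval : ∀ u : ℂ, u ≠ 0 → g u = u * Z (u + 1) := fun u hu => update_of_ne hu _ _
  have hg0 : g 0 = (r : ℂ) := update_self _ _ _
  have hgd : DifferentiableAt ℂ g 0 := by
    have hball : Metric.ball (0:ℂ) (1/2) ∈ 𝓝 (0:ℂ) := Metric.ball_mem_nhds _ (by norm_num)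
    have hd : DifferentiableOn ℂ f (Metric.ball (0:ℂ) (1/2) \ {0}) := by
      intro u hu
      have hu0 : u ≠ 0 := hu.2
      have hu1 : u + 1 ≠ 0 := by
        intro h
        have hlt : ‖u‖ < 1/2 := by simpa [Complex.dist_eq] using hu.1
        have heq : ‖u‖ = 1 := by rw [show u = -1 by linear_combination h]; simp
        rw [heq] at hlt; norm_num at hlt
      have hu2 : u + 1 ≠ 1 := fun h => hu0 (by linear_combination h)
      exact ((differentiableAt_id.differentiableWithinAt).mul
        (((hdiff _ hu1 hu2).comp u
          (differentiableAt_id.add_const 1)).differentiableWithinAt))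
    have ho : (fun z : ℂ => f z - f 0) =o[𝓝[≠] (0:ℂ)] fun z => (z - 0)⁻¹ :=
      IsBoundedUnder.isLittleO_sub_self_inv
        ((hT.sub tendsto_const_nhds).norm.isBoundedUnder_le)
    have hdo := Complex.differentiableOn_update_limUnder_of_isLittleO hball hd ho
    have hlim : limUnder (𝓝[≠] (0:ℂ)) f = (r : ℂ) := hT.limUnder_eq
    rw [hlim] at hdo
    rw [hg]
    exact hdo.differentiableAt hball
  set A : ℂ → ℂ := fun u => Z (u + 2) with hA
  have hAd : DifferentiableAt ℂ A 0 := by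
    have h2 : DifferentiableAt ℂ Z ((fun u : ℂ => u + 2) 0) := by
      simp only [zero_add]
      exact hdiff 2 (by norm_num) (by norm_num)
    exact h2.comp 0 (differentiableAt_id.add_const 2)
  set G : ℂ → ℂ := fun u => g u ^ 3 * A (2*u)
      - 3/2 * (g (-u) * g u * g (2*u) * A u)
      + 1/2 * (g (-u)^2 * g (2*u) * A (-u)) with hG
  have hG0 : G 0 = 0 := by
    simp only [hG, neg_zero, mul_zero, hg0]
    ring
  have hc : HasDerivAt g (deriv g 0) 0 := hgd.hasDerivAt
  have ha1 : HasDerivAt A (deriv A 0) 0 := hAd.hasDerivAt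
  set c := deriv g 0
  set a1 := deriv A 0
  have hneg : HasDerivAt (fun u : ℂ => -u) (-1) 0 := by
    exact hasDerivAt_neg' (0:ℂ)
  have h2d : HasDerivAt (fun u : ℂ => 2*u) 2 0 := by
    simpa using (hasDerivAt_id (0:ℂ)).const_mul (2:ℂ)
  have hgneg : HasDerivAt (fun u : ℂ => g (-u)) (c * -1) 0 := by
    have h := HasDerivAt.comp (0:ℂ)
      (show HasDerivAt g c ((fun u : ℂ => -u) 0) by simpa using hc) hneg
    simpa [Function.comp_def] using h
  have hg2 : HasDerivAt (fun u : ℂ => g (2*u)) (c * 2) 0 := by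
    have h := HasDerivAt.comp (0:ℂ)
      (show HasDerivAt g c ((fun u : ℂ => 2*u) 0) by simpa using hc) h2d
    simpa [Function.comp_def] using h
  have hAneg : HasDerivAt (fun u : ℂ => A (-u)) (a1 * -1) 0 := by
    have h := HasDerivAt.comp (0:ℂ)
      (show HasDerivAt A a1 ((fun u : ℂ => -u) 0) by simpa using ha1) hneg
    simpa [Function.comp_def] using h
  have hA2 : HasDerivAt (fun u : ℂ => A (2*u)) (a1 * 2) 0 := by
    have h := HasDerivAt.comp (0:ℂ)
      (show HasDerivAt A a1 ((fun u : ℂ => 2*u) 0) by simpa using ha1) h2d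
    simpa [Function.comp_def] using h
  have hGd : HasDerivAt G 0 0 := by
    have hT1 := (hc.pow 3).mul hA2
    have hT2 := (((hgneg.mul hc).mul hg2).mul ha1).const_mul (3/2 : ℂ)
    have hT3 := (((hgneg.pow 2).mul hg2).mul hAneg).const_mul (1/2 : ℂ)
    have hD := (hT1.sub hT2).add hT3
    refine hD.congr_deriv ?_
    simp only [Pi.mul_apply, Pi.pow_apply, neg_zero, mul_zero, hg0]
    ring
  have hslope : Tendsto (fun u : ℂ => G u / u) (𝓝[≠] (0:ℂ)) (𝓝 0) := by
    have h := hasDerivAt_iff_tendsto_slope.mp hGd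
    refine Tendsto.congr (fun u => ?_) h
    simp [slope_def_field, hG0]
  have htrans2 : Tendsto (fun s : ℂ => s - 1/2) (𝓝[≠] (1/2:ℂ)) (𝓝[≠] (0:ℂ)) := by
    apply tendsto_nhdsWithin_of_tendsto_nhds_of_eventually_within
    · have h : Tendsto (fun s : ℂ => s - 1/2) (𝓝 (1/2:ℂ)) (𝓝 (0:ℂ)) := by
        simpa using (continuous_sub_right (1/2:ℂ)).tendsto (1/2)
      exact h.mono_left nhdsWithin_le_nhds
    · filter_upwards [self_mem_nhdsWithin] with s hs
      simp only [Set.mem_compl_iff, Set.mem_singleton_iff] at hs ⊢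
      exact sub_ne_zero.2 hs
  have hcomp := hslope.comp htrans2
  refine Tendsto.congr' ?_ hcomp
  filter_upwards [self_mem_nhdsWithin] with s hs
  simp only [Set.mem_compl_iff, Set.mem_singleton_iff] at hs
  have hu : s - 1/2 ≠ 0 := sub_ne_zero.2 hs
  have h1 : g (s - 1/2) = (s - 1/2) * Z (s + 1/2) := by
    rw [hgval _ hu, show s - 1/2 + 1 = s + 1/2 by ring]
  have h2 : g (-(s - 1/2)) = -(s - 1/2) * Z (s - 1/2) := by
    rw [hgval _ (neg_ne_zero.2 hu), show -(s - 1/2) + 1 = 1 - (s - 1/2) by ring, hfe]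
  have h3 : g (2*(s - 1/2)) = 2*(s - 1/2) * Z (2*s) := by
    rw [hgval _ (mul_ne_zero two_ne_zero hu), show 2*(s - 1/2) + 1 = 2*s by ring]
  have h4 : A (s - 1/2) = Z (s + 3/2) := by
    simp only [hA]; rw [show s - 1/2 + 2 = s + 3/2 by ring]
  have h5 : A (2*(s - 1/2)) = Z (2*s + 1) := by
    simp only [hA]; rw [show 2*(s - 1/2) + 2 = 2*s + 1 by ring]
  have h6 : A (-(s - 1/2)) = Z (s - 3/2) := by
    simp only [hA]; rw [show -(s - 1/2) + 2 = 1 - (s - 3/2) by ring, hfe]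
  simp only [Function.comp, hG, h1, h2, h3, h4, h5, h6]
  rw [div_eq_iff hu]
  ring
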